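/- For all integers 0 ≤ r_1 ≤ d_1 ≤ d_2 and r_2 ≥ 0 there exists a polynomial P ∈ ℤ[X] such that for every finite field F_q with q elements, C_q(d_2, r_2, d_1, r_1) = P(q). -/

import Mathlib

set_option linter.unusedSectionVars false
set_option maxHeartbeats 1000000
set_option synthInstance.maxHeartbeats 1000000

/-- The standard symmetric bilinear form of rank `r` on `K^d` (for `r ≤ d`): the
diagonal matrix with `r` ones followed by zeros. -/
def stdForm (K : Type) [Field K] (d r : ℕ) : Matrix (Fin d) (Fin d) K :=
  Matrix.diagonal fun i => if (i : ℕ) < r then 1 else 0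

/-- `C_q(d₂, r₂, d₁, r₁)`: the number of symmetric bilinear forms on `F_q^{d₂}` of rank
`r₂` whose restriction to `F_q^{d₁}` (embedded as the span of the first `d₁` standard
basis vectors) is a fixed symmetric bilinear form of rank `r₁` — this number does not
depend on the choice of the fixed form, so we use the standard one — with the
convention that `C_q(d₂, r₂, d₁, r₁) = 0` when `r₁ > d₁` (or `d₁ > d₂`). -/
noncomputable def C (K : Type) [Field K] [Fintype K] (d₂ r₂ d₁ r₁ : ℕ) : ℕ :=
  if h : d₁ ≤ d₂ ∧ r₁ ≤ d₁ then
    Nat.card {M : Matrix (Fin d₂) (Fin d₂) K //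
      M.IsSymm ∧ M.rank = r₂ ∧
      M.submatrix (Fin.castLE h.1) (Fin.castLE h.1) = stdForm K d₁ r₁}
  else 0

open Matrix
variable {K : Type} [Field K] {d : ℕ}

def border (M : Matrix (Fin d) (Fin d) K) (b : Fin d → K) (c : K) :
    Matrix (Fin (d+1)) (Fin (d+1)) K :=
  Fin.snoc (fun i => Fin.snoc (M i) (b i)) (Fin.snoc b c)

@[simp] lemma border_cc (M : Matrix (Fin d) (Fin d) K) (b c i j) :
    border M b c i.castSucc j.castSucc = M i j := by simp [border]

@[simp] lemma border_cl (M : Matrix (Fin d) (Fin d) K) (b c i) :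
    border M b c i.castSucc (Fin.last d) = b i := by simp [border]

@[simp] lemma border_lc (M : Matrix (Fin d) (Fin d) K) (b c j) :
    border M b c (Fin.last d) j.castSucc = b j := by simp [border]

@[simp] lemma border_ll (M : Matrix (Fin d) (Fin d) K) (b c) :
    border M b c (Fin.last d) (Fin.last d) = c := by simp [border]

lemma border_mulVec (M : Matrix (Fin d) (Fin d) K) (b c) (v : Fin (d+1) → K) :
    (border M b c).mulVec v =
      Fin.snoc (M.mulVec (v ∘ Fin.castSucc) + (v (Fin.last d)) • b)
        (b ⬝ᵥ (v ∘ Fin.castSucc) + c * v (Fin.last d)) := by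
  ext i
  induction i using Fin.lastCases with
  | last => simp [mulVec, dotProduct, Fin.sum_univ_castSucc]
  | cast i => simp [mulVec, dotProduct, Fin.sum_univ_castSucc, mul_comm]

lemma snoc_eq_zero_iff {f : Fin d → K} {g : K} :
    (Fin.snoc f g : Fin (d+1) → K) = 0 ↔ f = 0 ∧ g = 0 := by
  constructor
  · intro h
    constructor
    · ext i; have := congrFun h i.castSucc; simpa using this
    · have := congrFun h (Fin.last d); simpa using this
  · rintro ⟨rfl, rfl⟩; ext i; induction i using Fin.lastCases <;> simp

lemma mem_ker_border_iff {M : Matrix (Fin d) (Fin d) K} {b : Fin d → K} {c : K}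
    {v : Fin (d+1) → K} :
    v ∈ LinearMap.ker (border M b c).mulVecLin ↔
      M.mulVec (v ∘ Fin.castSucc) + (v (Fin.last d)) • b = 0 ∧
      b ⬝ᵥ (v ∘ Fin.castSucc) + c * v (Fin.last d) = 0 := by
  rw [LinearMap.mem_ker, mulVecLin_apply, border_mulVec, snoc_eq_zero_iff]

lemma symm_dot {M : Matrix (Fin d) (Fin d) K} (hM : M.IsSymm) (x z : Fin d → K) :
    M.mulVec x ⬝ᵥ z = x ⬝ᵥ M.mulVec z := by
  rw [dotProduct_mulVec, ← mulVec_transpose, hM.eq, dotProduct_comm]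

lemma rank_add_ker (A : Matrix (Fin d) (Fin d) K) :
    A.rank + Module.finrank K (LinearMap.ker A.mulVecLin) = d := by
  have := LinearMap.finrank_range_add_finrank_ker A.mulVecLin
  rwa [Module.finrank_fin_fun] at this

/-- linear map `z ↦ snoc z 0` -/
def snocL0 : (Fin d → K) →ₗ[K] (Fin (d+1) → K) where
  toFun z := Fin.snoc z 0
  map_add' z w := by ext i; induction i using Fin.lastCases <;> simp
  map_smul' a z := by ext i; induction i using Fin.lastCases <;> simp

@[simp] lemma snocL0_apply (z : Fin d → K) : (snocL0 z : Fin (d+1) → K) = Fin.snoc z 0 := rfl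

section caseA
variable {M : Matrix (Fin d) (Fin d) K} (hM : M.IsSymm) (x : Fin d → K)

/-- Case A: `b ∈ col M`, `c` the forced value: rank stays. -/
lemma rank_border_of_mem (hM : M.IsSymm) (x : Fin d → K) :
    (border M (M.mulVec x) (x ⬝ᵥ M.mulVec x)).rank = M.rank := by
  set b := M.mulVec x with hb
  set c := x ⬝ᵥ M.mulVec x with hc
  -- the linear map (ker M × K) → ker (border)
  have hmem : ∀ p : ↥(LinearMap.ker M.mulVecLin) × K,
      (Fin.snoc (↑p.1 - p.2 • x) p.2 : Fin (d+1) → K) ∈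
        LinearMap.ker (border M b c).mulVecLin := by
    rintro ⟨⟨z, hz⟩, t⟩
    rw [LinearMap.mem_ker] at hz
    rw [mulVecLin_apply] at hz
    rw [mem_ker_border_iff]
    constructor
    · simp only [Fin.init_snoc, Fin.snoc_comp_castSucc, Fin.snoc_last]
      rw [mulVec_sub, mulVec_smul, hz]
      simp [hb]
    · simp only [Fin.snoc_comp_castSucc, Fin.snoc_last]
      rw [dotProduct_sub, dotProduct_smul]
      rw [hb, symm_dot hM x z, hz]
      simp only [hc, dotProduct_zero, smul_eq_mul, zero_sub, neg_add_eq_zero]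
      rw [symm_dot hM x x]
      ring
  let f : (↥(LinearMap.ker M.mulVecLin) × K) →ₗ[K]
      ↥(LinearMap.ker (border M b c).mulVecLin) :=
    { toFun := fun p => ⟨Fin.snoc (↑p.1 - p.2 • x) p.2, hmem p⟩
      map_add' := by
        rintro ⟨⟨z, hz⟩, t⟩ ⟨⟨z', hz'⟩, t'⟩
        ext i
        induction i using Fin.lastCases <;> simp <;> ring
      map_smul' := by
        rintro a ⟨⟨z, hz⟩, t⟩
        ext i
        induction i using Fin.lastCases <;> simp <;> ring }
  have hbij : Function.Bijective f := by
    constructor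
    · rintro ⟨⟨z, hz⟩, t⟩ ⟨⟨z', hz'⟩, t'⟩ h
      have h' := congrArg Subtype.val h
      have ht : t = t' := by
        have := congrFun h' (Fin.last d); simpa [f] using this
      subst ht
      have hz : z - t • x = z' - t • x := by
        ext i
        have := congrFun h' i.castSucc; simpa [f] using this
      have : z = z' := by
        have := congrArg (· + t • x) hz; simpa using this
      simp [this]
    · rintro ⟨v, hv⟩
      rw [mem_ker_border_iff] at hv
      obtain ⟨h1, h2⟩ := hv
      set y := v ∘ Fin.castSucc with hy
      set t := v (Fin.last d) with ht
      have hker : y + t • x ∈ LinearMap.ker M.mulVecLin := by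
        rw [LinearMap.mem_ker, mulVecLin_apply, mulVec_add, mulVec_smul, ← hb]
        exact h1
      refine ⟨⟨⟨y + t • x, hker⟩, t⟩, ?_⟩
      ext i
      induction i using Fin.lastCases with
      | last => simp [f]; rfl
      | cast i => simp [f, hy]
  have hfr := LinearEquiv.finrank_eq (LinearEquiv.ofBijective f hbij)
  rw [Module.finrank_prod, Module.finrank_self] at hfr
  have h1 := rank_add_ker M
  have h2 := rank_add_ker (border M b c)
  omega
end caseA

/-- Case A': `b ∈ col M`, `c` not the forced value: rank goes up by 1. -/
lemma rank_border_of_mem_ne {M : Matrix (Fin d) (Fin d) K} (hM : M.IsSymm) (x : Fin d → K)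
    {c : K} (hc : c ≠ x ⬝ᵥ M.mulVec x) :
    (border M (M.mulVec x) c).rank = M.rank + 1 := by
  set b := M.mulVec x with hb
  have hmem : ∀ z : ↥(LinearMap.ker M.mulVecLin),
      (Fin.snoc (↑z) 0 : Fin (d+1) → K) ∈ LinearMap.ker (border M b c).mulVecLin := by
    rintro ⟨z, hz⟩
    rw [LinearMap.mem_ker, mulVecLin_apply] at hz
    rw [mem_ker_border_iff]
    simp only [Fin.snoc_comp_castSucc, Fin.snoc_last, smul_zero, mul_zero, add_zero]
    refine ⟨by simp [hz], ?_⟩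
    rw [hb, symm_dot hM x z, hz, dotProduct_zero]
  let f : ↥(LinearMap.ker M.mulVecLin) →ₗ[K]
      ↥(LinearMap.ker (border M b c).mulVecLin) :=
    LinearMap.codRestrict _ (snocL0.comp (LinearMap.ker M.mulVecLin).subtype)
      (fun z => hmem z)
  have hbij : Function.Bijective f := by
    constructor
    · rintro ⟨z, hz⟩ ⟨z', hz'⟩ h
      have h' := congrArg Subtype.val h
      ext i
      have := congrFun h' i.castSucc
      simpa [f, LinearMap.codRestrict] using this
    · rintro ⟨v, hv⟩
      rw [mem_ker_border_iff] at hv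
      obtain ⟨h1, h2⟩ := hv
      set y := v ∘ Fin.castSucc with hy
      set t := v (Fin.last d) with ht
      have hby : b ⬝ᵥ y = - (t * (x ⬝ᵥ M.mulVec x)) := by
        have : M.mulVec y = - (t • b) := eq_neg_of_add_eq_zero_left h1
        rw [hb, symm_dot hM x y, this]
        simp [hb, mul_comm]
      have ht0 : t = 0 := by
        rw [hby] at h2
        have : (c - x ⬝ᵥ M.mulVec x) * t = 0 := by ring_nf; linear_combination h2
        rcases mul_eq_zero.mp this with h | h
        · exact absurd (sub_eq_zero.mp h) hc
        · exact h
      have hker : y ∈ LinearMap.ker M.mulVecLin := by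
        rw [LinearMap.mem_ker, mulVecLin_apply]
        have := h1; rw [ht0] at this; simpa using this
      refine ⟨⟨y, hker⟩, ?_⟩
      ext i
      induction i using Fin.lastCases with
      | last => simp [f, LinearMap.codRestrict, ← ht0]; rfl
      | cast i => simp [f, LinearMap.codRestrict, hy]
  have hfr := LinearEquiv.finrank_eq (LinearEquiv.ofBijective f hbij)
  have h1 := rank_add_ker M
  have h2 := rank_add_ker (border M b c)
  have hle : M.rank ≤ d := M.rank_le_width
  omega

/-- If `b` is not in the column space of a symmetric `M`, there is `u ∈ ker M`
with `b ⬝ᵥ u ≠ 0`. -/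
lemma exists_ker_dot_ne {M : Matrix (Fin d) (Fin d) K} (hM : M.IsSymm)
    {b : Fin d → K} (hb : b ∉ LinearMap.range M.mulVecLin) :
    ∃ u, M.mulVec u = 0 ∧ b ⬝ᵥ u ≠ 0 := by
  set W := LinearMap.range M.mulVecLin with hW
  have hbq : W.mkQ b ≠ 0 := by
    simpa [Submodule.Quotient.mk_eq_zero] using hb
  obtain ⟨φ, hφ⟩ : ∃ φ : Module.Dual K ((Fin d → K) ⧸ W), φ (W.mkQ b) ≠ 0 := by
    by_contra h
    push_neg at h
    exact hbq ((Module.forall_dual_apply_eq_zero_iff K _).mp h)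
  set ψ : Module.Dual K (Fin d → K) := φ.comp W.mkQ with hψ
  set u : Fin d → K := fun i => ψ (fun j => if i = j then 1 else 0) with hu
  have hrep : ∀ v : Fin d → K, ψ v = v ⬝ᵥ u := by
    intro v
    conv_lhs => rw [pi_eq_sum_univ v]
    rw [map_sum]
    simp only [_root_.map_smul, smul_eq_mul]
    rfl
  have hvanish : ∀ z, ψ (M.mulVec z) = 0 := by
    intro z
    have hz : M.mulVec z ∈ W := ⟨z, rfl⟩
    have h0 : W.mkQ (M.mulVec z) = 0 := by
      rwa [Submodule.mkQ_apply, Submodule.Quotient.mk_eq_zero]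
    simp only [hψ, LinearMap.comp_apply, h0, map_zero]
  refine ⟨u, ?_, ?_⟩
  · ext i
    have h2 : ∀ z : Fin d → K, z ⬝ᵥ (M.mulVec u) = 0 := by
      intro z
      rw [← symm_dot hM z u, ← hrep]
      exact hvanish z
    have := h2 (fun j => if i = j then 1 else 0)
    simpa [dotProduct, ite_mul] using this
  · rw [← hrep]
    exact hφ

/-- dot product with `b` as a linear map -/
def dotL (b : Fin d → K) : (Fin d → K) →ₗ[K] K where
  toFun v := b ⬝ᵥ v
  map_add' v w := by simp [dotProduct_add]
  map_smul' a v := by simp [dotProduct_smul]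

@[simp] lemma dotL_apply (b v : Fin d → K) : dotL b v = b ⬝ᵥ v := rfl

/-- Case B: `b ∉ col M`: rank goes up by 2. -/
lemma rank_border_of_not_mem {M : Matrix (Fin d) (Fin d) K} (hM : M.IsSymm)
    {b : Fin d → K} (hb : b ∉ LinearMap.range M.mulVecLin) (c : K) :
    (border M b c).rank = M.rank + 2 := by
  set g : ↥(LinearMap.ker M.mulVecLin) →ₗ[K] K :=
    (dotL b).comp (LinearMap.ker M.mulVecLin).subtype with hg
  have hmem : ∀ z : ↥(LinearMap.ker g),
      (Fin.snoc ((z : ↥(LinearMap.ker M.mulVecLin)) : Fin d → K) 0 : Fin (d+1) → K) ∈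
        LinearMap.ker (border M b c).mulVecLin := by
    rintro ⟨⟨z, hz⟩, hgz⟩
    rw [LinearMap.mem_ker, mulVecLin_apply] at hz
    rw [LinearMap.mem_ker] at hgz
    simp only [hg, LinearMap.comp_apply, Submodule.coe_subtype, dotL_apply] at hgz
    rw [mem_ker_border_iff]
    simp only [Fin.snoc_comp_castSucc, Fin.snoc_last, smul_zero, mul_zero, add_zero]
    exact ⟨by simp [hz], by simpa using hgz⟩
  let f : ↥(LinearMap.ker g) →ₗ[K] ↥(LinearMap.ker (border M b c).mulVecLin) :=
    LinearMap.codRestrict _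
      (snocL0.comp ((LinearMap.ker M.mulVecLin).subtype.comp (LinearMap.ker g).subtype))
      (fun z => hmem z)
  have hbij : Function.Bijective f := by
    constructor
    · rintro ⟨⟨z, hz⟩, hgz⟩ ⟨⟨z', hz'⟩, hgz'⟩ h
      have h' := congrArg Subtype.val h
      ext i
      have := congrFun h' i.castSucc
      simpa [f, LinearMap.codRestrict] using this
    · rintro ⟨v, hv⟩
      rw [mem_ker_border_iff] at hv
      obtain ⟨h1, h2⟩ := hv
      set y := v ∘ Fin.castSucc with hy
      set t := v (Fin.last d) with ht
      have ht0 : t = 0 := by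
        by_contra htne
        apply hb
        refine ⟨(-t⁻¹) • y, ?_⟩
        rw [mulVecLin_apply, mulVec_smul]
        have : M.mulVec y = - (t • b) := eq_neg_of_add_eq_zero_left h1
        rw [this, smul_neg, neg_smul, neg_neg, smul_smul, inv_mul_cancel₀ htne, one_smul]
      have hky : M.mulVec y = 0 := by
        have := h1; rw [ht0] at this; simpa using this
      have hgy : b ⬝ᵥ y = 0 := by
        have := h2; rw [ht0] at this; simpa using this
      refine ⟨⟨⟨y, by simpa [LinearMap.mem_ker, mulVecLin_apply] using hky⟩, by
        simpa [LinearMap.mem_ker, hg] using hgy⟩, ?_⟩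
      ext i
      induction i using Fin.lastCases with
      | last => simp [f, LinearMap.codRestrict, ← ht0]; rfl
      | cast i => simp [f, LinearMap.codRestrict, hy]
  have hfr : Module.finrank K ↥(LinearMap.ker g) =
      Module.finrank K ↥(LinearMap.ker (border M b c).mulVecLin) :=
    LinearEquiv.finrank_eq (LinearEquiv.ofBijective f hbij)
  -- the functional g is surjective
  obtain ⟨u, hu1, hu2⟩ := exists_ker_dot_ne hM hb
  have hrange : LinearMap.range g = ⊤ := by
    rw [eq_top_iff]
    intro a _
    refine ⟨(a * (b ⬝ᵥ u)⁻¹) • ⟨u, by simpa [LinearMap.mem_ker, mulVecLin_apply] using hu1⟩, ?_⟩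
    simp only [_root_.map_smul, hg, LinearMap.comp_apply, Submodule.coe_subtype, dotL_apply,
      smul_eq_mul]
    field_simp
  have hrn := LinearMap.finrank_range_add_finrank_ker g
  rw [hrange, finrank_top, Module.finrank_self] at hrn
  have h1 := rank_add_ker M
  have h2 := rank_add_ker (border M b c)
  omega

open Classical in
/-- the forced corner value for `b` in the column space -/
noncomputable def gam (M : Matrix (Fin d) (Fin d) K) (b : Fin d → K) : K :=
  if h : ∃ x, M.mulVec x = b then h.choose ⬝ᵥ b else 0

lemma rank_border_class {M : Matrix (Fin d) (Fin d) K} (hM : M.IsSymm) (b : Fin d → K) (c : K) :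
    (b ∈ LinearMap.range M.mulVecLin ∧ c = gam M b ∧ (border M b c).rank = M.rank) ∨
    (b ∈ LinearMap.range M.mulVecLin ∧ c ≠ gam M b ∧ (border M b c).rank = M.rank + 1) ∨
    (b ∉ LinearMap.range M.mulVecLin ∧ (border M b c).rank = M.rank + 2) := by
  by_cases hb : b ∈ LinearMap.range M.mulVecLin
  · have hex : ∃ x, M.mulVec x = b := by
      obtain ⟨x, hx⟩ := hb; exact ⟨x, by simpa [mulVecLin_apply] using hx⟩
    have hgam : gam M b = hex.choose ⬝ᵥ b := by rw [gam, dif_pos hex]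
    have hxb : M.mulVec hex.choose = b := hex.choose_spec
    by_cases hc : c = gam M b
    · left
      refine ⟨hb, hc, ?_⟩
      have := rank_border_of_mem hM hex.choose
      rw [hxb] at this
      rw [hc, hgam]
      exact this
    · right; left
      refine ⟨hb, hc, ?_⟩
      have hcne : c ≠ hex.choose ⬝ᵥ M.mulVec hex.choose := by
        rw [hxb, ← hgam]; exact hc
      have := rank_border_of_mem_ne hM hex.choose hcne
      rwa [hxb] at this
  · right; right
    exact ⟨hb, rank_border_of_not_mem hM hb c⟩

lemma rank_border_eq_self_iff {M : Matrix (Fin d) (Fin d) K} (hM : M.IsSymm)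
    (b : Fin d → K) (c : K) :
    (border M b c).rank = M.rank ↔ b ∈ LinearMap.range M.mulVecLin ∧ c = gam M b := by
  rcases rank_border_class hM b c with ⟨h1, h2, h3⟩ | ⟨h1, h2, h3⟩ | ⟨h1, h3⟩ <;>
    constructor <;> intro h <;> first
    | exact ⟨h1, h2⟩
    | exact h3
    | (exfalso; omega)
    | (exfalso; exact h2 h.2)
    | (exfalso; exact h1 h.1)

lemma rank_border_eq_succ_iff {M : Matrix (Fin d) (Fin d) K} (hM : M.IsSymm)
    (b : Fin d → K) (c : K) :
    (border M b c).rank = M.rank + 1 ↔ b ∈ LinearMap.range M.mulVecLin ∧ c ≠ gam M b := by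
  rcases rank_border_class hM b c with ⟨h1, h2, h3⟩ | ⟨h1, h2, h3⟩ | ⟨h1, h3⟩ <;>
    constructor <;> intro h <;> first
    | exact ⟨h1, h2⟩
    | exact h3
    | (exfalso; omega)
    | (exfalso; exact h.2 h2)
    | (exfalso; exact h1 h.1)

lemma rank_border_eq_succ2_iff {M : Matrix (Fin d) (Fin d) K} (hM : M.IsSymm)
    (b : Fin d → K) (c : K) :
    (border M b c).rank = M.rank + 2 ↔ b ∉ LinearMap.range M.mulVecLin := by
  rcases rank_border_class hM b c with ⟨h1, h2, h3⟩ | ⟨h1, h2, h3⟩ | ⟨h1, h3⟩ <;>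
    constructor <;> intro h <;> first
    | exact h1
    | exact h3
    | (exfalso; omega)
    | (exfalso; exact h h1)

lemma rank_border_mem_range {M : Matrix (Fin d) (Fin d) K} (hM : M.IsSymm)
    (b : Fin d → K) (c : K) :
    (border M b c).rank = M.rank ∨ (border M b c).rank = M.rank + 1 ∨
      (border M b c).rank = M.rank + 2 := by
  rcases rank_border_class hM b c with ⟨_, _, h3⟩ | ⟨_, _, h3⟩ | ⟨_, h3⟩ <;> omega

/-- number of extensions of a rank-`s` symmetric `d × d` matrix to rank `r` -/
def eNat (q d s r : ℕ) : ℕ :=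
  if r = s then q^s else if r = s+1 then q^s*(q-1) else if r = s+2 then (q^d - q^s)*q else 0

open Classical in
lemma count_ext [Fintype K] {M : Matrix (Fin d) (Fin d) K} (hM : M.IsSymm) (r : ℕ) :
    Nat.card {p : (Fin d → K) × K // (border M p.1 p.2).rank = r}
      = eNat (Fintype.card K) d M.rank r := by
  set q := Fintype.card K with hq
  set s := M.rank with hs
  set rng := LinearMap.range M.mulVecLin with hrng
  have hcard_rng : Nat.card ↥rng = q ^ s := by
    letI : Fintype ↥rng := Fintype.ofFinite _
    rw [Nat.card_eq_fintype_card, Module.card_eq_pow_finrank (K := K) (V := ↥rng)]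
    rfl
  have hcard_mem : Nat.card {b : Fin d → K // b ∈ rng} = q ^ s := hcard_rng
  have hcard_not : Nat.card {b : Fin d → K // b ∉ rng} = q ^ d - q ^ s := by
    letI : Fintype {b : Fin d → K // b ∈ rng} := Fintype.ofFinite _
    letI : Fintype {b : Fin d → K // b ∉ rng} := Fintype.ofFinite _
    rw [Nat.card_eq_fintype_card, Fintype.card_subtype_compl,
      ← Nat.card_eq_fintype_card (α := {b : Fin d → K // b ∈ rng}), hcard_mem]
    congr 1
    rw [Fintype.card_fun, Fintype.card_fin]
  have hne0 : Nat.card {c : K // c ≠ (0:K)} = q - 1 := by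
    letI : Fintype {c : K // c = (0:K)} := Fintype.ofFinite _
    letI : Fintype {c : K // c ≠ (0:K)} := Fintype.ofFinite _
    rw [Nat.card_eq_fintype_card, Fintype.card_subtype_compl, Fintype.card_subtype_eq]
  by_cases h0 : r = s
  · subst h0
    rw [eNat, if_pos rfl, ← hcard_rng]
    apply Nat.card_congr
    exact
      { toFun := fun p => ⟨p.1.1, ((rank_border_eq_self_iff hM p.1.1 p.1.2).mp p.2).1⟩
        invFun := fun b => ⟨(b.1, gam M b.1), (rank_border_eq_self_iff hM _ _).mpr ⟨b.2, rfl⟩⟩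
        left_inv := fun p => by
          have h := ((rank_border_eq_self_iff hM p.1.1 p.1.2).mp p.2).2
          exact Subtype.ext (Prod.ext rfl h.symm)
        right_inv := fun b => rfl }
  · by_cases h1 : r = s + 1
    · subst h1
      rw [eNat, if_neg (by omega), if_pos rfl]
      have : Nat.card {p : (Fin d → K) × K // (border M p.1 p.2).rank = s + 1}
          = Nat.card (↥rng × {c : K // c ≠ (0:K)}) := by
        apply Nat.card_congr
        exact
          { toFun := fun p =>
              (⟨p.1.1, ((rank_border_eq_succ_iff hM p.1.1 p.1.2).mp p.2).1⟩,
               ⟨p.1.2 - gam M p.1.1,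
                sub_ne_zero.mpr ((rank_border_eq_succ_iff hM p.1.1 p.1.2).mp p.2).2⟩)
            invFun := fun bc =>
              ⟨(bc.1.1, bc.2.1 + gam M bc.1.1),
               (rank_border_eq_succ_iff hM _ _).mpr
                 ⟨bc.1.2, fun h => bc.2.2 (by simpa using h)⟩⟩
            left_inv := fun p => Subtype.ext (Prod.ext rfl (by ring))
            right_inv := fun bc => by
              refine Prod.ext rfl (Subtype.ext ?_)
              simp }
      rw [this, Nat.card_prod, hcard_rng, hne0]
    · by_cases h2 : r = s + 2
      · subst h2
        rw [eNat, if_neg (by omega), if_neg (by omega), if_pos rfl]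
        have : Nat.card {p : (Fin d → K) × K // (border M p.1 p.2).rank = s + 2}
            = Nat.card ({b : Fin d → K // b ∉ rng} × K) := by
          apply Nat.card_congr
          exact
            { toFun := fun p =>
                (⟨p.1.1, (rank_border_eq_succ2_iff hM p.1.1 p.1.2).mp p.2⟩, p.1.2)
              invFun := fun bc =>
                ⟨(bc.1.1, bc.2), (rank_border_eq_succ2_iff hM _ _).mpr bc.1.2⟩
              left_inv := fun p => rfl
              right_inv := fun bc => rfl }
        rw [this, Nat.card_prod, hcard_not, Nat.card_eq_fintype_card]
      · rw [eNat, if_neg h0, if_neg h1, if_neg h2]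
        have : IsEmpty {p : (Fin d → K) × K // (border M p.1 p.2).rank = r} := by
          refine ⟨fun p => ?_⟩
          rcases rank_border_mem_range hM p.1.1 p.1.2 with h | h | h <;>
            (rw [p.2] at h; omega)
        exact Nat.card_of_isEmpty

lemma isSymm_border {M : Matrix (Fin d) (Fin d) K} (hM : M.IsSymm) (b : Fin d → K) (c : K) :
    (border M b c).IsSymm := by
  rw [Matrix.IsSymm]
  ext i j
  rw [transpose_apply]
  induction i using Fin.lastCases with
  | last => induction j using Fin.lastCases with
    | last => rfl
    | cast j => simp
  | cast i => induction j using Fin.lastCases with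
    | last => simp
    | cast j => simp [hM.apply]

lemma isSymm_block {M' : Matrix (Fin (d+1)) (Fin (d+1)) K} (hM' : M'.IsSymm) :
    (M'.submatrix Fin.castSucc Fin.castSucc).IsSymm := by
  rw [Matrix.IsSymm]
  ext i j
  simp [hM'.apply]

lemma border_recover {M' : Matrix (Fin (d+1)) (Fin (d+1)) K} (hM' : M'.IsSymm) :
    border (M'.submatrix Fin.castSucc Fin.castSucc)
      (fun i => M' i.castSucc (Fin.last d)) (M' (Fin.last d) (Fin.last d)) = M' := by
  ext i j
  induction i using Fin.lastCases with
  | last => induction j using Fin.lastCases with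
    | last => simp
    | cast j => simpa using (hM'.apply _ _).symm
  | cast i => induction j using Fin.lastCases with
    | last => simp
    | cast j => simp

lemma sub_block {d₁ : ℕ} (h : d₁ ≤ d) (h' : d₁ ≤ d + 1) (M' : Matrix (Fin (d+1)) (Fin (d+1)) K) :
    M'.submatrix (Fin.castLE h') (Fin.castLE h') =
      (M'.submatrix Fin.castSucc Fin.castSucc).submatrix (Fin.castLE h) (Fin.castLE h) := by
  ext i j
  have hi : Fin.castLE h' i = Fin.castSucc (Fin.castLE h i) := by
    apply Fin.ext; simp
  have hj : Fin.castLE h' j = Fin.castSucc (Fin.castLE h j) := by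
    apply Fin.ext; simp
  simp only [submatrix_apply, hi, hj]

open Classical in
lemma step_sum {d₁ r₁ : ℕ} [Fintype K] (h : d₁ ≤ d) (hr1 : r₁ ≤ d₁) (r : ℕ) :
    C K (d+1) r d₁ r₁ =
      ∑ s ∈ Finset.range (d+1), C K d s d₁ r₁ * eNat (Fintype.card K) d s r := by
  have h' : d₁ ≤ d + 1 := Nat.le_succ_of_le h
  set q := Fintype.card K with hq
  set good : Matrix (Fin d) (Fin d) K → Prop := fun N =>
    N.IsSymm ∧ N.submatrix (Fin.castLE h) (Fin.castLE h) = stdForm K d₁ r₁ with hgood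
  -- rewrite C (d+1)
  rw [C, dif_pos ⟨h', hr1⟩]
  -- the decomposition equivalence
  have e1 : {M' : Matrix (Fin (d+1)) (Fin (d+1)) K //
      M'.IsSymm ∧ M'.rank = r ∧
        M'.submatrix (Fin.castLE h') (Fin.castLE h') = stdForm K d₁ r₁} ≃
      {Np : Matrix (Fin d) (Fin d) K × ((Fin d → K) × K) //
        good Np.1 ∧ (border Np.1 Np.2.1 Np.2.2).rank = r} :=
    { toFun := fun M' =>
        ⟨(M'.1.submatrix Fin.castSucc Fin.castSucc,
          (fun i => M'.1 i.castSucc (Fin.last d), M'.1 (Fin.last d) (Fin.last d))),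
         ⟨⟨isSymm_block M'.2.1, by rw [← sub_block h h']; exact M'.2.2.2⟩,
          by rw [border_recover M'.2.1]; exact M'.2.2.1⟩⟩
      invFun := fun Np =>
        ⟨border Np.1.1 Np.1.2.1 Np.1.2.2,
         isSymm_border Np.2.1.1 _ _, Np.2.2, by
          rw [sub_block h h']
          have : (border Np.1.1 Np.1.2.1 Np.1.2.2).submatrix Fin.castSucc Fin.castSucc
              = Np.1.1 := by ext i j; simp
          rw [this]
          exact Np.2.1.2⟩
      left_inv := fun M' => Subtype.ext (border_recover M'.2.1)
      right_inv := fun Np => by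
        refine Subtype.ext (Prod.ext ?_ (Prod.ext ?_ ?_)) <;> [skip; skip; simp] <;> ext <;> simp }
  rw [Nat.card_congr e1]
  have e2 : {Np : Matrix (Fin d) (Fin d) K × ((Fin d → K) × K) //
        good Np.1 ∧ (border Np.1 Np.2.1 Np.2.2).rank = r} ≃
      Σ N : Matrix (Fin d) (Fin d) K,
        {p : (Fin d → K) × K // good N ∧ (border N p.1 p.2).rank = r} :=
    Equiv.subtypeProdEquivSigmaSubtype
      (fun N (p : (Fin d → K) × K) => good N ∧ (border N p.1 p.2).rank = r)
  rw [Nat.card_congr e2]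
  letI : ∀ N : Matrix (Fin d) (Fin d) K,
      Fintype {p : (Fin d → K) × K // good N ∧ (border N p.1 p.2).rank = r} :=
    fun N => Fintype.ofFinite _
  rw [Nat.card_eq_fintype_card, Fintype.card_sigma]
  -- fiber cardinalities
  have hfiber : ∀ N : Matrix (Fin d) (Fin d) K,
      Fintype.card {p : (Fin d → K) × K // good N ∧ (border N p.1 p.2).rank = r}
        = if good N then eNat q d N.rank r else 0 := by
    intro N
    by_cases hN : good N
    · rw [if_pos hN, ← count_ext hN.1 r, Nat.card_eq_fintype_card]
      apply Fintype.card_congr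
      exact Equiv.subtypeEquivRight (fun p => by tauto)
    · rw [if_neg hN]
      rw [Fintype.card_eq_zero_iff]
      exact ⟨fun p => hN p.2.1⟩
  rw [Finset.sum_congr rfl (fun N _ => hfiber N), ← Finset.sum_filter]
  -- group by rank
  have hmaps : ∀ N ∈ Finset.univ.filter good, N.rank ∈ Finset.range (d+1) := by
    intro N _
    rw [Finset.mem_range]
    exact Nat.lt_succ_of_le N.rank_le_width
  rw [← Finset.sum_fiberwise_of_maps_to hmaps (fun N => eNat q d N.rank r)]
  refine Finset.sum_congr rfl (fun s hs => ?_)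
  have : ∀ N ∈ (Finset.univ.filter good).filter (fun N => N.rank = s),
      eNat q d N.rank r = eNat q d s r := by
    intro N hN
    rw [(Finset.mem_filter.mp hN).2]
  rw [Finset.sum_congr rfl this, Finset.sum_const, smul_eq_mul]
  congr 1
  -- the count of matrices equals C K d s d₁ r₁
  rw [C, dif_pos ⟨h, hr1⟩, Finset.filter_filter]
  have h1 : (Finset.filter (fun a => good a ∧ a.rank = s) Finset.univ).card
      = Nat.card {N : Matrix (Fin d) (Fin d) K // good N ∧ N.rank = s} := by
    rw [Nat.card_eq_fintype_card, Fintype.card_subtype]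
  rw [h1]
  exact Nat.card_congr (Equiv.subtypeEquivRight (fun N => by simp only [hgood]; tauto))

lemma castLE_self_submatrix (M : Matrix (Fin d) (Fin d) K) (h : d ≤ d) :
    M.submatrix (Fin.castLE h) (Fin.castLE h) = M := by
  ext i j
  congr 1 <;> exact Fin.ext (by simp)

open Classical in
lemma rank_stdForm {d r : ℕ} (hr : r ≤ d) : (stdForm K d r).rank = r := by
  rw [stdForm, Matrix.rank_diagonal]
  have e : {i : Fin d // (if (i : ℕ) < r then (1:K) else 0) ≠ 0} ≃ Fin r :=
    { toFun := fun x => ⟨(x.1 : ℕ), by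
        have := x.2
        by_contra hc
        push_neg at hc
        rw [if_neg (by omega)] at this
        exact this rfl⟩
      invFun := fun y => ⟨⟨y.1, lt_of_lt_of_le y.2 hr⟩, by
        rw [if_pos y.2]; exact one_ne_zero⟩
      left_inv := fun x => Subtype.ext (Fin.ext rfl)
      right_inv := fun y => Fin.ext rfl }
  rw [Fintype.card_congr e, Fintype.card_fin]

lemma base_case {d₁ r₁ : ℕ} [Fintype K] (hr1 : r₁ ≤ d₁) (r : ℕ) :
    C K d₁ r d₁ r₁ = if r = r₁ then 1 else 0 := by
  rw [C, dif_pos ⟨le_refl d₁, hr1⟩]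
  by_cases hrr : r = r₁
  · rw [if_pos hrr]
    have hcongr : ∀ M : Matrix (Fin d₁) (Fin d₁) K,
        (M.IsSymm ∧ M.rank = r ∧
          M.submatrix (Fin.castLE (le_refl d₁)) (Fin.castLE (le_refl d₁)) = stdForm K d₁ r₁)
          ↔ M = stdForm K d₁ r₁ := by
      intro M
      constructor
      · intro hM
        rw [← castLE_self_submatrix M (le_refl d₁)]
        exact hM.2.2
      · rintro rfl
        refine ⟨?_, ?_, castLE_self_submatrix _ _⟩
        · rw [stdForm]; exact Matrix.isSymm_diagonal _
        · rw [rank_stdForm hr1, hrr]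
    rw [Nat.card_congr (Equiv.subtypeEquivRight hcongr)]
    haveI : Unique {M : Matrix (Fin d₁) (Fin d₁) K // M = stdForm K d₁ r₁} :=
      ⟨⟨⟨stdForm K d₁ r₁, rfl⟩⟩, fun x => Subtype.ext x.2⟩
    exact Nat.card_unique
  · rw [if_neg hrr]
    refine Nat.card_eq_zero.mpr (Or.inl ⟨?_⟩)
    rintro ⟨M, hM1, hM2, hM3⟩
    rw [castLE_self_submatrix] at hM3
    subst hM3
    rw [rank_stdForm hr1] at hM2
    exact hrr hM2.symm

/-- polynomial version of `eNat` -/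
noncomputable def Epoly (d s r : ℕ) : Polynomial ℤ :=
  if r = s then Polynomial.X ^ s
  else if r = s + 1 then Polynomial.X ^ s * (Polynomial.X - 1)
  else if r = s + 2 then Polynomial.X ^ (s + 1) * (Polynomial.X ^ (d - s) - 1)
  else 0

lemma eNat_cast {q d s r : ℕ} (hq : 1 ≤ q) (hs : s ≤ d) :
    ((eNat q d s r : ℤ)) = (Epoly d s r).eval (q : ℤ) := by
  have hpow : q ^ s ≤ q ^ d := Nat.pow_le_pow_right hq hs
  rw [eNat, Epoly]
  split_ifs with h1 h2 h3
  · simp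
  · simp only [Polynomial.eval_mul, Polynomial.eval_pow, Polynomial.eval_sub, Polynomial.eval_X,
      Polynomial.eval_one]
    push_cast [Nat.cast_sub hq]
    ring
  · simp only [Polynomial.eval_mul, Polynomial.eval_pow, Polynomial.eval_sub, Polynomial.eval_X,
      Polynomial.eval_one]
    push_cast [Nat.cast_sub hpow]
    have h4 : (q : ℤ) ^ (s + 1) * (q : ℤ) ^ (d - s) = (q : ℤ) ^ (d + 1) := by
      rw [← pow_add]
      congr 1
      omega
    linear_combination -h4
  · simp

/-- the family of polynomials, by recursion on `k = d₂ - d₁` -/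
noncomputable def Pfam (d₁ r₁ : ℕ) : ℕ → ℕ → Polynomial ℤ
  | 0, r => if r = r₁ then 1 else 0
  | (k+1), r => ∑ s ∈ Finset.range (d₁ + k + 1), Pfam d₁ r₁ k s * Epoly (d₁ + k) s r

lemma main_count {d₁ r₁ : ℕ} (hr1 : r₁ ≤ d₁) (k : ℕ) :
    ∀ (r : ℕ) (K : Type) [Field K] [Fintype K],
      (C K (d₁ + k) r d₁ r₁ : ℤ) = (Pfam d₁ r₁ k r).eval (Fintype.card K : ℤ) := by
  induction k with
  | zero =>
    intro r K _ _
    rw [Nat.add_zero, base_case hr1 r, Pfam]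
    split_ifs <;> simp
  | succ k ih =>
    intro r K _ _
    have h : d₁ ≤ d₁ + k := Nat.le_add_right _ _
    rw [show d₁ + (k + 1) = (d₁ + k) + 1 from rfl, step_sum h hr1 r, Pfam,
      Polynomial.eval_finset_sum]
    push_cast
    refine Finset.sum_congr rfl (fun s hs => ?_)
    rw [Polynomial.eval_mul, ih s K,
      eNat_cast Fintype.card_pos (Nat.lt_succ_iff.mp (Finset.mem_range.mp hs))]

/-- For all `0 ≤ r₁ ≤ d₁ ≤ d₂` and `r₂ ≥ 0` there is an integer polynomial `P` with
`C_q(d₂, r₂, d₁, r₁) = P(q)` for every finite field `F_q`. -/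
theorem stmt_9 (d₁ d₂ r₁ r₂ : ℕ) (hr : r₁ ≤ d₁) (hd : d₁ ≤ d₂) :
    ∃ P : Polynomial ℤ,
      ∀ (K : Type) [Field K] [Fintype K],
        (C K d₂ r₂ d₁ r₁ : ℤ) = P.eval (Fintype.card K : ℤ) := by

  refine ⟨Pfam d₁ r₁ (d₂ - d₁) r₂, fun K _ _ => ?_⟩
  have hd2 : d₁ + (d₂ - d₁) = d₂ := by omega
  have h := main_count hr (d₂ - d₁) r₂ K
  rwa [hd2] at h
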